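/- Let G be the graph with vertices u1,...,u6 and edges u1u2, u1u3, u1u4, u4u5, u5u6 (the subdivided claw S_{1,1,3}), and let H be the graph with vertices x1,...,x5 and edges x1x2, x1x3, x1x4 (the graph K_{1,3}+P_1). Let ℓ* be the black-and-white labelling of H that colours x2, x3, x4, x5 black and x1 white. Then G contains H^{ℓ*} as a strongly labelled induced subgraph (so G is not strongly H^{ℓ*}-free), yet G is weakly H^{ℓ*}-free. -/
import Mathlib


open SimpleGraph

/-- `B` is the black colour class of a black-and-white labelling of `H`:
every edge of `H` joins a vertex of `B` to a vertex outside `B`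
(equivalently, `B` and its complement `Bᶜ` are both independent sets,
i.e. `(B, Bᶜ)` is a bipartition of `H` into two possibly empty independent sets). -/
def IsBWLabelling {V : Type*} (H : SimpleGraph V) (B : Set V) : Prop :=
  ∀ ⦃u v : V⦄, H.Adj u v → (u ∈ B ↔ v ∉ B)

/-- `H` with black class `BH` is a labelled induced subgraph of `G` with black class `BG`:
there is an injective map preserving both adjacency and non-adjacency which maps
black vertices to black vertices and white vertices to white vertices. -/
def LabelledIndSubgraph {VH VG : Type*} (H : SimpleGraph VH) (BH : Set VH)
    (G : SimpleGraph VG) (BG : Set VG) : Prop :=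
  ∃ f : VH → VG, Function.Injective f ∧
    (∀ u v : VH, H.Adj u v ↔ G.Adj (f u) (f v)) ∧
    (∀ u : VH, u ∈ BH ↔ f u ∈ BG)

/-- `G` is strongly `H^ℓ`-free, where `BH` is the black class of the labelling `ℓ`:
there is no bipartition `(BG, BGᶜ)` of `G` such that `H^ℓ` is a labelled induced
subgraph of `(BG, BGᶜ, E_G)`. -/
def StronglyFree {VG VH : Type*} (G : SimpleGraph VG) (H : SimpleGraph VH)
    (BH : Set VH) : Prop :=
  ¬ ∃ BG : Set VG, IsBWLabelling G BG ∧ LabelledIndSubgraph H BH G BG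

/-- `G` is weakly `H^ℓ`-free, where `BH` is the black class of the labelling `ℓ`:
it is not the case that `H^ℓ` is a labelled induced subgraph of `(BG, BGᶜ, E_G)`
for every bipartition `(BG, BGᶜ)` of `G`. -/
def WeaklyFree {VG VH : Type*} (G : SimpleGraph VG) (H : SimpleGraph VH)
    (BH : Set VH) : Prop :=
  ¬ ∀ BG : Set VG, IsBWLabelling G BG → LabelledIndSubgraph H BH G BG

/-- `G` is `H`-free: `G` contains no induced subgraph isomorphic to `H`. -/
def HFree {VG VH : Type*} (G : SimpleGraph VG) (H : SimpleGraph VH) : Prop :=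
  ¬ ∃ f : VH → VG, Function.Injective f ∧ ∀ u v : VH, H.Adj u v ↔ G.Adj (f u) (f v)

/-- The graph `S_{1,1,3}` on vertices `u1, …, u6` (here `0, …, 5`)
with edges `u1u2, u1u3, u1u4, u4u5, u5u6`. -/
def GS113 : SimpleGraph (Fin 6) :=
  SimpleGraph.fromEdgeSet {s(0, 1), s(0, 2), s(0, 3), s(3, 4), s(4, 5)}

/-- The graph `K_{1,3} + P_1` on vertices `x1, …, x5` (here `0, …, 4`)
with edges `x1x2, x1x3, x1x4`. -/
def HK13P1 : SimpleGraph (Fin 5) :=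
  SimpleGraph.fromEdgeSet {s(0, 1), s(0, 2), s(0, 3)}

instance : DecidableRel GS113.Adj := fun u v => decidable_of_iff
  ((s(u,v) = s(0,1) ∨ s(u,v) = s(0,2) ∨ s(u,v) = s(0,3) ∨ s(u,v) = s(3,4) ∨ s(u,v) = s(4,5)) ∧ u ≠ v)
  (by simp [GS113])

instance : DecidableRel HK13P1.Adj := fun u v => decidable_of_iff
  ((s(u,v) = s(0,1) ∨ s(u,v) = s(0,2) ∨ s(u,v) = s(0,3)) ∧ u ≠ v)
  (by simp [HK13P1])

lemma aux_bw1 : IsBWLabelling GS113 ({1,2,3,5} : Set (Fin 6)) := by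
  unfold IsBWLabelling; decide

lemma aux_bw2 : IsBWLabelling GS113 ({0,4} : Set (Fin 6)) := by
  unfold IsBWLabelling; decide

lemma aux_sub : LabelledIndSubgraph HK13P1 ({1,2,3,4} : Set (Fin 5)) GS113 ({1,2,3,5} : Set (Fin 6)) := by
  unfold LabelledIndSubgraph
  refine ⟨![0,1,2,3,5], by decide, by decide, by decide⟩

lemma aux_deg : ∀ v a b c : Fin 6, v ≠ 0 → v ≠ 4 →
    GS113.Adj v a → GS113.Adj v b → GS113.Adj v c → a = b ∨ a = c ∨ b = c := by
  decide

lemma aux_nosub : ¬ LabelledIndSubgraph HK13P1 ({1,2,3,4} : Set (Fin 5)) GS113 ({0,4} : Set (Fin 6)) := by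
  rintro ⟨f, hinj, hadj, hB⟩
  have h0 : f 0 ∉ ({0,4} : Set (Fin 6)) := fun h => by
    have := (hB 0).mpr h
    simp at this
  have h0' : f 0 ≠ 0 ∧ f 0 ≠ 4 := by
    simpa [Set.mem_insert_iff] using h0
  have ha : GS113.Adj (f 0) (f 1) := (hadj 0 1).mp (by decide)
  have hb : GS113.Adj (f 0) (f 2) := (hadj 0 2).mp (by decide)
  have hc : GS113.Adj (f 0) (f 3) := (hadj 0 3).mp (by decide)
  rcases aux_deg (f 0) (f 1) (f 2) (f 3) h0'.1 h0'.2 ha hb hc with h | h | h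
  · exact absurd (hinj h) (by decide)
  · exact absurd (hinj h) (by decide)
  · exact absurd (hinj h) (by decide)

/-- `G = S_{1,1,3}` contains `H^{ℓ*}` as a strongly labelled induced subgraph (so `G` is
not strongly `H^{ℓ*}`-free), yet `G` is weakly `H^{ℓ*}`-free, where `H = K_{1,3} + P_1`
and `ℓ*` colours `x2, x3, x4, x5` black and `x1` white. -/
theorem stmt_3 :
    (¬ StronglyFree GS113 HK13P1 ({1, 2, 3, 4} : Set (Fin 5))) ∧
    WeaklyFree GS113 HK13P1 ({1, 2, 3, 4} : Set (Fin 5)) := by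
  constructor
  · intro h
    exact h ⟨_, aux_bw1, aux_sub⟩
  · intro h
    exact aux_nosub (h _ aux_bw2)
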